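/- In a WSTS with decidable ordering and computable effective pred-basis, the covering problem is decidable: given states s and t, one can decide whether there exists t' with s ⟶* t' and t ⪯ t'. -/

import Mathlib

set_option maxHeartbeats 1000000

namespace WSTSCover

open Computable

/-- Iterated pred-basis saturation starting from `[t]`. -/
def Kb (pb : ℕ → List ℕ) (t : ℕ) : ℕ → List ℕ
  | 0 => [t]
  | n + 1 => Kb pb t n ++ (Kb pb t n).flatMap pb

/-- Boolean test: some element of `l` is `≤ s` (where `f` decides `le`). -/
def exB (f : ℕ × ℕ → Bool) (l : List ℕ) (s : ℕ) : Bool :=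
  !(decide ((l.flatMap fun b => cond (f (b, s)) [0] []).length = 0))

/-- Boolean test: the upward closure has stabilized at stage `n`. -/
def stabB (pb : ℕ → List ℕ) (f : ℕ × ℕ → Bool) (t n : ℕ) : Bool :=
  decide (((Kb pb t (n + 1)).flatMap fun b =>
    cond (exB f (Kb pb t n) b) ([] : List ℕ) [0]).length = 0)

/-- The decision (partial) function for coverability. -/
def coverPart (pb : ℕ → List ℕ) (f : ℕ × ℕ → Bool) (p : ℕ × ℕ) : Part Bool :=
  (Nat.rfind fun n => Part.some (stabB pb f p.2 n)).map fun n => exB f (Kb pb p.2 n) p.1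

section Math

variable {step le : ℕ → ℕ → Prop} {pb : ℕ → List ℕ}

theorem Kb_mono {t m n : ℕ} (h : m ≤ n) {b : ℕ} (hb : b ∈ Kb pb t m) :
    b ∈ Kb pb t n := by
  induction n, h using Nat.le_induction with
  | base => exact hb
  | succ n hn ih => exact List.mem_append_left _ ih

theorem Kb_sound
    (htrans : ∀ a b c, le a b → le b c → le a c)
    (hupsim : ∀ s s' t, step s s' → le s t →
      ∃ t', Relation.ReflTransGen step t t' ∧ le s' t')
    (hpbspec : ∀ s x, (∃ b ∈ pb s, le b x) ↔
      ∃ w, (∃ t, le s t ∧ step w t) ∧ le w x)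
    {t : ℕ} : ∀ n s, (∃ b ∈ Kb pb t n, le b s) →
      ∃ t', Relation.ReflTransGen step s t' ∧ le t t'
  | 0, s, ⟨b, hb, hbs⟩ => by
      simp only [Kb, List.mem_singleton] at hb
      subst hb
      exact ⟨s, .refl, hbs⟩
  | n + 1, s, ⟨b, hb, hbs⟩ => by
      rcases List.mem_append.1 hb with h | h
      · exact Kb_sound htrans hupsim hpbspec n s ⟨b, h, hbs⟩
      · rcases List.mem_flatMap.1 h with ⟨c, hc, hbc⟩
        rcases (hpbspec c s).1 ⟨b, hbc, hbs⟩ with ⟨w, ⟨u, hcu, hwu⟩, hws⟩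
        rcases hupsim w u s hwu hws with ⟨s', hss', hus'⟩
        rcases Kb_sound htrans hupsim hpbspec n s' ⟨c, hc, htrans _ _ _ hcu hus'⟩ with
          ⟨t', hst', htt'⟩
        exact ⟨t', hss'.trans hst', htt'⟩

theorem Kb_complete (hrefl : ∀ a, le a a)
    (hpbspec : ∀ s x, (∃ b ∈ pb s, le b x) ↔
      ∃ w, (∃ t, le s t ∧ step w t) ∧ le w x)
    {s t u : ℕ} (h : Relation.ReflTransGen step s u) (htu : le t u) :
    ∃ n, ∃ b ∈ Kb pb t n, le b s := by
  induction h using Relation.ReflTransGen.head_induction_on with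
  | refl => exact ⟨0, t, by simp [Kb], htu⟩
  | head h' _ ih =>
      obtain ⟨n, b, hb, hbc⟩ := ih
      obtain ⟨b', hb', hb's⟩ := (hpbspec b _).2 ⟨_, ⟨_, hbc, h'⟩, hrefl _⟩
      exact ⟨n + 1, b', List.mem_append_right _ (List.mem_flatMap.2 ⟨b, hb, hb'⟩), hb's⟩

theorem stab_exists (hwqo : ∀ s : ℕ → ℕ, ∃ i j : ℕ, i < j ∧ le (s i) (s j)) (t : ℕ) :
    ∃ n, ∀ b ∈ Kb pb t (n + 1), ∃ c ∈ Kb pb t n, le c b := by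
  by_contra h
  push_neg at h
  choose g hg1 hg2 using h
  obtain ⟨i, j, hij, hle⟩ := hwqo g
  exact hg2 j (g i) (Kb_mono hij (hg1 i)) hle

theorem stab_all (hrefl : ∀ a, le a a)
    (htrans : ∀ a b c, le a b → le b c → le a c)
    (hpbspec : ∀ s x, (∃ b ∈ pb s, le b x) ↔
      ∃ w, (∃ t, le s t ∧ step w t) ∧ le w x)
    {t n : ℕ}
    (hstab : ∀ b ∈ Kb pb t (n + 1), ∃ c ∈ Kb pb t n, le c b) :
    ∀ m, ∀ b ∈ Kb pb t m, ∃ c ∈ Kb pb t n, le c b := by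
  intro m
  induction m with
  | zero =>
      intro b hb
      simp only [Kb, List.mem_singleton] at hb
      subst hb
      exact ⟨b, Kb_mono (Nat.zero_le n) (by simp [Kb]), hrefl b⟩
  | succ m ih =>
      intro b hb
      rcases List.mem_append.1 hb with h | h
      · exact ih b h
      · rcases List.mem_flatMap.1 h with ⟨a, ha, hba⟩
        rcases ih a ha with ⟨c, hc, hca⟩
        rcases (hpbspec a b).1 ⟨b, hba, hrefl b⟩ with ⟨w, ⟨u, hau, hwu⟩, hwb⟩
        rcases (hpbspec c b).2 ⟨w, ⟨u, htrans _ _ _ hca hau, hwu⟩, hwb⟩ with ⟨b', hb', hb'b⟩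
        rcases hstab b' (List.mem_append_right _ (List.mem_flatMap.2 ⟨c, hc, hb'⟩)) with
          ⟨c', hc', hc'b'⟩
        exact ⟨c', hc', htrans _ _ _ hc'b' hb'b⟩

theorem cover_iff (hrefl : ∀ a, le a a)
    (htrans : ∀ a b c, le a b → le b c → le a c)
    (hupsim : ∀ s s' t, step s s' → le s t →
      ∃ t', Relation.ReflTransGen step t t' ∧ le s' t')
    (hpbspec : ∀ s x, (∃ b ∈ pb s, le b x) ↔
      ∃ w, (∃ t, le s t ∧ step w t) ∧ le w x)
    {s t n : ℕ}
    (hstab : ∀ b ∈ Kb pb t (n + 1), ∃ c ∈ Kb pb t n, le c b) :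
    (∃ t', Relation.ReflTransGen step s t' ∧ le t t') ↔ ∃ b ∈ Kb pb t n, le b s := by
  constructor
  · rintro ⟨t', hst', htt'⟩
    obtain ⟨m, b, hb, hbs⟩ := Kb_complete hrefl hpbspec hst' htt'
    obtain ⟨c, hc, hcb⟩ := stab_all hrefl htrans hpbspec hstab m b hb
    exact ⟨c, hc, htrans _ _ _ hcb hbs⟩
  · exact Kb_sound htrans hupsim hpbspec n s

theorem exB_iff {f : ℕ × ℕ → Bool} (hf : ∀ p : ℕ × ℕ, le p.1 p.2 ↔ f p = true)
    (l : List ℕ) (s : ℕ) : exB f l s = true ↔ ∃ b ∈ l, le b s := by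
  unfold exB
  rw [Bool.not_eq_true', decide_eq_false_iff_not]
  simp only [ne_eq, List.length_eq_zero_iff, List.flatMap_eq_nil_iff, not_forall]
  constructor
  · rintro ⟨b, hb, hcond⟩
    refine ⟨b, hb, (hf (b, s)).2 ?_⟩
    cases h : f (b, s)
    · simp [h] at hcond
    · rfl
  · rintro ⟨b, hb, hbs⟩
    exact ⟨b, hb, by simp [(hf (b, s)).1 hbs]⟩

theorem stabB_iff {f : ℕ × ℕ → Bool} (hf : ∀ p : ℕ × ℕ, le p.1 p.2 ↔ f p = true)
    (t n : ℕ) : stabB pb f t n = true ↔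
      ∀ b ∈ Kb pb t (n + 1), ∃ c ∈ Kb pb t n, le c b := by
  unfold stabB
  rw [decide_eq_true_iff]
  simp only [List.length_eq_zero_iff, List.flatMap_eq_nil_iff]
  constructor
  · intro h b hb
    have := h b hb
    rw [← exB_iff hf]
    cases hx : exB f (Kb pb t n) b
    · simp [hx] at this
    · rfl
  · intro h b hb
    have : exB f (Kb pb t n) b = true := (exB_iff hf _ _).2 (h b hb)
    simp [this]

end Math

section Comp

variable {α β σ : Type*} [Primcodable α] [Primcodable β] [Primcodable σ]

theorem comp_flatMap {f : α → List β} {g : α → β → List σ}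
    (hf : Computable f) (hg : Computable₂ g) :
    Computable fun a => (f a).flatMap (g a) := by
  have key : ∀ (l : List β) (g' : β → List σ) (n : ℕ),
      (Nat.rec (motive := fun _ => List σ) []
        (fun y IH => IH ++ Option.casesOn l[y]? [] g') n) = (l.take n).flatMap g' := by
    intro l g' n
    induction n with
    | zero => simp
    | succ n ih =>
        rw [List.take_succ, List.flatMap_append]
        simp only [ih]
        congr 1
        cases h : l[n]? <;> simp [h]
  have hh : Computable fun x : α × (ℕ × List σ) =>
      x.2.2 ++ Option.casesOn (f x.1)[x.2.1]? [] (g x.1) :=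
    Computable.list_append.comp (Computable.snd.comp Computable.snd)
      (Computable.option_casesOn
        (Computable.list_getElem?.comp (hf.comp Computable.fst)
          (Computable.fst.comp Computable.snd))
        (Computable.const ([] : List σ))
        (show Computable fun y : (α × (ℕ × List σ)) × β => g y.1.1 y.2 from
          hg.comp (Computable.fst.comp Computable.fst) Computable.snd).to₂)
  have H : Computable fun a =>
      (Nat.rec (motive := fun _ => List σ) []
        (fun y IH => IH ++ Option.casesOn (f a)[y]? [] (g a)) ((f a).length)) :=
    Computable.nat_rec (f := fun a => (f a).length) (g := fun _ => ([] : List σ))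
      (h := fun a q => q.2 ++ Option.casesOn (f a)[q.1]? [] (g a))
      (Computable.list_length.comp hf) (Computable.const ([] : List σ)) hh.to₂
  exact H.of_eq fun a => by rw [key, List.take_length]

theorem comp_not {c : α → Bool} (hc : Computable c) : Computable fun a => !(c a) :=
  Primrec.not.to_comp.comp hc

theorem comp_decide_eq_zero : Computable fun n : ℕ => decide (n = 0) :=
  (Primrec.eq.comp Primrec.id (Primrec.const 0)).decide.to_comp

theorem Kb_computable {pb : ℕ → List ℕ} (hpb : Computable pb) : Computable₂ (Kb pb) := by
  have hh : Computable fun x : (ℕ × ℕ) × (ℕ × List ℕ) =>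
      x.2.2 ++ x.2.2.flatMap pb :=
    Computable.list_append.comp (Computable.snd.comp Computable.snd)
      (comp_flatMap (g := fun _ b => pb b) (Computable.snd.comp Computable.snd)
        (show Computable fun y : ((ℕ × ℕ) × (ℕ × List ℕ)) × ℕ => pb y.2 from
          hpb.comp Computable.snd).to₂)
  have H : Computable fun p : ℕ × ℕ =>
      (Nat.rec (motive := fun _ => List ℕ) [p.1]
        (fun _ IH => IH ++ IH.flatMap pb) p.2) :=
    Computable.nat_rec (f := fun p : ℕ × ℕ => p.2) (g := fun p : ℕ × ℕ => [p.1])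
      (h := fun _ q => q.2 ++ q.2.flatMap pb)
      Computable.snd
      (Computable.list_cons.comp Computable.fst (Computable.const ([] : List ℕ))) hh.to₂
  refine H.of_eq fun p => ?_
  induction p.2 with
  | zero => rfl
  | succ n ih => simp only [Kb, ← ih]

theorem exB_computable {f : ℕ × ℕ → Bool} (hf : Computable f) :
    Computable₂ (exB f) := by
  have hcond : Computable fun x : (List ℕ × ℕ) × ℕ =>
      cond (f (x.2, x.1.2)) [0] ([] : List ℕ) :=
    Computable.cond
      (hf.comp (Computable.pair Computable.snd (Computable.snd.comp Computable.fst)))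
      (Computable.const [0]) (Computable.const ([] : List ℕ))
  have hL : Computable fun p : List ℕ × ℕ =>
      (p.1.flatMap fun b => cond (f (b, p.2)) [0] []) :=
    comp_flatMap (g := fun p b => cond (f (b, p.2)) [0] ([] : List ℕ))
      Computable.fst hcond.to₂
  exact comp_not (comp_decide_eq_zero.comp (Computable.list_length.comp hL))

theorem stabB_computable {pb : ℕ → List ℕ} {f : ℕ × ℕ → Bool}
    (hpb : Computable pb) (hf : Computable f) : Computable₂ (stabB pb f) := by
  have hK := Kb_computable hpb
  have hL : Computable fun p : ℕ × ℕ =>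
      ((Kb pb p.1 (p.2 + 1)).flatMap fun b =>
        cond (exB f (Kb pb p.1 p.2) b) ([] : List ℕ) [0]) := by
    have hcond : Computable fun x : (ℕ × ℕ) × ℕ =>
        cond (exB f (Kb pb x.1.1 x.1.2) x.2) ([] : List ℕ) [0] :=
      Computable.cond
        ((exB_computable hf).comp
          (hK.comp (Computable.fst.comp Computable.fst) (Computable.snd.comp Computable.fst))
          Computable.snd)
        (Computable.const ([] : List ℕ)) (Computable.const [0])
    exact comp_flatMap (g := fun (p : ℕ × ℕ) b => cond (exB f (Kb pb p.1 p.2) b) ([] : List ℕ) [0])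
      (hK.comp Computable.fst (Computable.succ.comp Computable.snd)) hcond.to₂
  exact comp_decide_eq_zero.comp (Computable.list_length.comp hL)

theorem coverPart_partrec {pb : ℕ → List ℕ} {f : ℕ × ℕ → Bool}
    (hpb : Computable pb) (hf : Computable f) : Partrec (coverPart pb f) := by
  have hq : Partrec₂ fun (p : ℕ × ℕ) (n : ℕ) => (Part.some (stabB pb f p.2 n) : Part Bool) := by
    exact Computable₂.partrec₂
      ((stabB_computable hpb hf).comp (Computable.snd.comp Computable.fst) Computable.snd).to₂
  have hg : Computable₂ fun (p : ℕ × ℕ) (n : ℕ) => exB f (Kb pb p.2 n) p.1 := by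
    exact ((exB_computable hf).comp
      ((Kb_computable hpb).comp (Computable.snd.comp Computable.fst) Computable.snd)
      (Computable.fst.comp Computable.fst)).to₂
  exact (Partrec.rfind hq).map hg

end Comp

end WSTSCover

open WSTSCover in
/-- Decidability of the covering problem for a WSTS (states encoded as naturals)
with decidable ordering and an effective pred-basis. -/
theorem wsts_covering_decidable
    (step : ℕ → ℕ → Prop) (le : ℕ → ℕ → Prop)
    (hrefl : ∀ a, le a a)
    (htrans : ∀ a b c, le a b → le b c → le a c)
    (hwqo : ∀ s : ℕ → ℕ, ∃ i j : ℕ, i < j ∧ le (s i) (s j))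
    (hupsim : ∀ s s' t, step s s' → le s t →
      ∃ t', Relation.ReflTransGen step t t' ∧ le s' t')
    (hfin : ∀ s, {t | step s t}.Finite)
    (hledec : ComputablePred fun p : ℕ × ℕ => le p.1 p.2)
    (hpb : ∃ pb : ℕ → List ℕ, Computable pb ∧
      ∀ s x, (∃ b ∈ pb s, le b x) ↔
        ∃ w, (∃ t, le s t ∧ step w t) ∧ le w x) :
    ComputablePred fun p : ℕ × ℕ =>
      ∃ t', Relation.ReflTransGen step p.1 t' ∧ le p.2 t' := by
  obtain ⟨pb, hpbc, hpbspec⟩ := hpb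
  obtain ⟨f, hfc, hfeq⟩ := ComputablePred.computable_iff.1 hledec
  have hf : ∀ p : ℕ × ℕ, le p.1 p.2 ↔ f p = true := by
    intro p
    have := congrFun hfeq p
    rw [this]
  -- for each t, a stabilization point exists
  have H : ∀ p : ℕ × ℕ, ∃ n, stabB pb f p.2 n = true := fun p => by
    obtain ⟨n, hn⟩ := stab_exists (le := le) (pb := pb) hwqo p.2
    exact ⟨n, (stabB_iff hf p.2 n).2 hn⟩
  -- the total decision function
  set g : ℕ × ℕ → Bool := fun p => exB f (Kb pb p.2 (Nat.find (H p))) p.1 with hg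
  have hgmem : ∀ p, g p ∈ coverPart pb f p := by
    intro p
    have hfind : Nat.find (H p) ∈ Nat.rfind fun n => Part.some (stabB pb f p.2 n) := by
      refine Nat.mem_rfind.2 ?_
      constructor
      · exact Part.mem_some_iff.2 (Nat.find_spec (H p)).symm
      · intro m hm
        exact Part.mem_some_iff.2 (Bool.not_eq_true _ ▸ (Nat.find_min (H p) hm) : _).symm
    exact Part.mem_map _ hfind
  have hgc : Computable g := (coverPart_partrec hpbc hfc).of_eq_tot hgmem
  refine ComputablePred.computable_iff.2 ⟨g, hgc, ?_⟩
  funext p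
  have hstab : ∀ b ∈ Kb pb p.2 (Nat.find (H p) + 1), ∃ c ∈ Kb pb p.2 (Nat.find (H p)), le c b :=
    (stabB_iff hf _ _).1 (Nat.find_spec (H p))
  have := cover_iff hrefl htrans hupsim hpbspec hstab (s := p.1)
  rw [← exB_iff hf (Kb pb p.2 (Nat.find (H p))) p.1] at this
  simp only [hg]
  exact propext this
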